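/- Let h : [0, ∞) → [0, ∞) be bijective, strictly increasing, concave, with h(0) = 0, differentiable on (0, ∞) with h′ > 0 on (0, ∞). Let κ ≥ 1 and let f : E → ℝ be convex with nonempty minimizer set X* and minimum value f*, satisfying f(x) − f* ≤ h(d(x, X*)²) and f(x) − f* ≥ h(d(x, X*)²/κ) for all x ∈ E. Set m = ⌊κ·e⌋ − 1 (so m ≥ 1). Consider the restarted heavy-ball procedure: z_0 = x_0, and for each q, z_{q+1} is the m-th iterate of the heavy-ball method for h-RG+ functions started at z_q, i.e. there exist points and subgradients with, for 1 ≤ k ≤ m, g_{k−1} ∈ ∂f(x_{k−1}) (g_{k−1} = 0 whenever f(x_{k−1}) = f*), γ_{k−1} = 1/(2(k+1)·h′(h⁻¹(f(x_{k−1}) − f*))) if f(x_{k−1}) > f* and γ_{k−1} = 0 otherwise, x_k = x_{k−1} − γ_{k−1}·g_{k−1} + ((k−1)/(k+1))·(x_{k−1} − x_{k−2}), with x_0 = z_q and x_m = z_{q+1}. Then for every q ∈ ℕ: d(z_q, X*)² ≤ (1 − 1/(κ·e))^{q·m}·d(x_0, X*)². -/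

import Mathlib

open scoped RealInnerProductSpace

set_option maxHeartbeats 1000000


lemma hb_tangent (h h' : ℝ → ℝ) (hconc : ConcaveOn ℝ (Set.Ici 0) h)
    (hderiv : ∀ t > (0:ℝ), HasDerivAt h (h' t) t)
    {r a : ℝ} (hr : 0 < r) (ha : 0 ≤ a) :
    h a ≤ h r + h' r * (a - r) := by
  rcases eq_or_ne a r with rfl | hne
  · simp
  have hrs : r ∈ Set.Ici (0:ℝ) := le_of_lt hr
  have hsec : ∀ {u v : ℝ}, u ∈ Set.Ici (0:ℝ) → v ∈ Set.Ici (0:ℝ) → u ≠ r → v ≠ r → u ≤ v →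
      (h v - h r) / (v - r) ≤ (h u - h r) / (u - r) := by
    intro u v hu hv hur hvr huv
    have hsm := (hconc.neg).secant_mono hrs hu hv hur hvr huv
    simp only [Pi.neg_apply] at hsm
    have h1 : (-h u - -h r) / (u - r) = -((h u - h r) / (u - r)) := by ring
    have h2 : (-h v - -h r) / (v - r) = -((h v - h r) / (v - r)) := by ring
    rw [h1, h2] at hsm
    linarith
  have hslope := hasDerivAt_iff_tendsto_slope.mp (hderiv r hr)
  rcases lt_or_gt_of_ne hne with hlt | hgt
  · -- a < r
    have key : h' r ≤ (h a - h r) / (a - r) := by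
      refine le_of_tendsto hslope ?_
      have hmem : Set.Ioi a ∈ nhdsWithin r {r}ᶜ :=
        mem_nhdsWithin_of_mem_nhds (Ioi_mem_nhds hlt)
      filter_upwards [hmem, self_mem_nhdsWithin] with t ht hts
      have := hsec ha (le_trans ha (le_of_lt ht)) hne hts (le_of_lt ht)
      rw [slope_def_field]
      exact this
    rw [le_div_iff_of_neg (by linarith)] at key
    linarith
  · -- r < a
    have key : (h a - h r) / (a - r) ≤ h' r := by
      refine ge_of_tendsto hslope ?_
      have hmem : Set.Ioo 0 a ∈ nhdsWithin r {r}ᶜ :=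
        mem_nhdsWithin_of_mem_nhds (Ioo_mem_nhds hr hgt)
      filter_upwards [hmem, self_mem_nhdsWithin] with t ht hts
      have := hsec (le_of_lt ht.1) ha hts hne (le_of_lt ht.2)
      rw [slope_def_field]
      exact this
    rw [div_le_iff₀ (by linarith)] at key
    linarith

lemma hb_numeric (κ : ℝ) (hκ : 1 ≤ κ) (m : ℕ) (hm : m = Nat.floor (κ * Real.exp 1) - 1)
    (hm1 : 1 ≤ m) :
    κ ≤ ((m : ℝ) + 1) * (1 - 1 / (κ * Real.exp 1)) ^ m := by
  set n := κ * Real.exp 1 with hn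
  have hepos : (0:ℝ) < Real.exp 1 := Real.exp_pos 1
  have he2 : (2:ℝ) < Real.exp 1 := by
    have := Real.exp_one_gt_d9; linarith
  have hn2 : (2:ℝ) < n := lt_of_lt_of_le he2 (le_mul_of_one_le_left hepos.le hκ)
  have hfl : Nat.floor n = m + 1 := by
    have h1 : 1 ≤ Nat.floor n := by
      apply Nat.one_le_floor_iff _ |>.mpr
      linarith
    omega
  have hNle : ((m : ℝ) + 1) ≤ n := by
    have := Nat.floor_le (show (0:ℝ) ≤ n by linarith)
    rw [hfl] at this; push_cast at this; linarith
  have hNgt : n < (m : ℝ) + 2 := by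
    have := Nat.lt_floor_add_one n
    rw [hfl] at this; push_cast at this; linarith
  have hm1R : (2:ℝ) ≤ (m:ℝ) + 1 := by
    have : (1:ℝ) ≤ (m:ℝ) := by exact_mod_cast hm1
    linarith
  have hn1 : (0:ℝ) < n - 1 := by linarith
  set θ : ℝ := n - ((m:ℝ) + 1) with hθ
  have hθ0 : 0 ≤ θ := by simp [hθ]; linarith
  have hθ1 : θ < 1 := by simp [hθ]; linarith
  set A : ℝ := θ / (n - 1) with hA
  -- Step: n/(m+1) ≤ exp A
  have e1 : A + 1 ≤ Real.exp A := Real.add_one_le_exp A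
  have e2 : n / ((m:ℝ) + 1) ≤ 1 + A := by
    have hmp : (0:ℝ) < (m:ℝ) + 1 := by linarith
    have hdd : θ / ((m:ℝ) + 1) ≤ θ / (n - 1) :=
      div_le_div_of_nonneg_left hθ0 hn1 (by linarith)
    have heq : n / ((m:ℝ) + 1) = 1 + θ / ((m:ℝ) + 1) := by
      field_simp [hθ]
      linarith
    rw [heq, hA]
    linarith
  have e3 : n / ((m:ℝ) + 1) ≤ Real.exp A := by linarith
  -- exp(-(m/(n-1))) = exp A * exp (-1)
  have hexp : Real.exp (-((m:ℝ) / (n - 1))) = Real.exp A * Real.exp (-1) := by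
    rw [← Real.exp_add]
    congr 1
    rw [hA, hθ]
    field_simp
    ring
  -- Step1 : exp(-(1/(n-1))) ≤ 1 - 1/n
  have step1 : Real.exp (-(1 / (n - 1))) ≤ 1 - 1 / n := by
    have hx : n / (n - 1) ≤ Real.exp (1 / (n - 1)) := by
      have := Real.add_one_le_exp (1 / (n - 1))
      have heq : n / (n - 1) = 1 / (n - 1) + 1 := by field_simp; ring
      linarith
    have hpos1 : (0:ℝ) < n / (n - 1) := by positivity
    rw [Real.exp_neg]
    have hinv := inv_anti₀ hpos1 hx
    have : (n / (n - 1))⁻¹ = 1 - 1 / n := by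
      rw [inv_div]
      field_simp
    linarith [this ▸ hinv]
  have hρ0 : (0:ℝ) ≤ 1 - 1 / n := by
    have : 1 / n ≤ 1 / 2 := by
      apply div_le_div_of_nonneg_left one_pos.le (by linarith) (by linarith)
    linarith
  -- Step2
  have step2 : Real.exp (-((m:ℝ) / (n - 1))) ≤ (1 - 1 / n) ^ m := by
    have : Real.exp (-((m:ℝ) / (n - 1))) = Real.exp (-(1 / (n - 1))) ^ m := by
      rw [← Real.exp_nat_mul]
      congr 1
      field_simp
    rw [this]
    exact pow_le_pow_left₀ (Real.exp_pos _).le step1 m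
  -- Step3
  have step3 : κ ≤ ((m:ℝ) + 1) * Real.exp (-((m:ℝ) / (n - 1))) := by
    rw [hexp, Real.exp_neg]
    have hmp : (0:ℝ) < (m:ℝ) + 1 := by linarith
    have h4 : n ≤ ((m:ℝ) + 1) * Real.exp A := by
      rw [div_le_iff₀ hmp] at e3
      linarith
    have h5 : κ * Real.exp 1 ≤ ((m:ℝ) + 1) * Real.exp A := by rw [← hn]; exact h4
    have h6 := mul_le_mul_of_nonneg_right h5 (inv_pos.mpr hepos).le
    have hl : κ * Real.exp 1 * (Real.exp 1)⁻¹ = κ := by field_simp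
    have hrr : ((m:ℝ) + 1) * Real.exp A * (Real.exp 1)⁻¹
        = ((m:ℝ) + 1) * (Real.exp A * (Real.exp 1)⁻¹) := by ring
    rw [hl, hrr] at h6
    exact h6
  calc κ ≤ ((m:ℝ) + 1) * Real.exp (-((m:ℝ) / (n - 1))) := step3
    _ ≤ ((m:ℝ) + 1) * (1 - 1 / n) ^ m := by
        apply mul_le_mul_of_nonneg_left step2 (by positivity)

lemma hb_epoch {E : Type*} [NormedAddCommGroup E] [InnerProductSpace ℝ E] [FiniteDimensional ℝ E]
    (h hinv h' : ℝ → ℝ)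
    (hbij : Set.BijOn h (Set.Ici 0) (Set.Ici 0))
    (hmono : StrictMonoOn h (Set.Ici 0))
    (hconc : ConcaveOn ℝ (Set.Ici 0) h)
    (h0 : h 0 = 0)
    (hderiv : ∀ t > (0 : ℝ), HasDerivAt h (h' t) t)
    (hpos : ∀ t > (0 : ℝ), 0 < h' t)
    (hinvOn : Set.InvOn hinv h (Set.Ici 0) (Set.Ici 0))
    (κ : ℝ) (hκ : 1 ≤ κ)
    (f : E → ℝ) (hconv : ConvexOn ℝ Set.univ f)
    (Xstar : Set E) (hXstar : Xstar = {z | ∀ y, f z ≤ f y})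
    (fstar : ℝ) (hfstar : ∀ z ∈ Xstar, f z = fstar)
    (hRG : ∀ z, f z - fstar ≤ h (Metric.infDist z Xstar ^ 2))
    (hLG : ∀ z, f z - fstar ≥ h (Metric.infDist z Xstar ^ 2 / κ))
    (hclosed : IsClosed Xstar)
    (m : ℕ) (hm1 : 1 ≤ m)
    (x g : ℕ → E) (γ : ℕ → ℝ)
    (hk : ∀ k, 1 ≤ k → k ≤ m →
        (∀ y, f y ≥ f (x (k - 1)) + ⟪g (k - 1), y - x (k - 1)⟫) ∧
        (f (x (k - 1)) = fstar → g (k - 1) = 0) ∧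
        γ (k - 1) = (if fstar < f (x (k - 1))
            then 1 / (2 * ((k : ℝ) + 1) * h' (hinv (f (x (k - 1)) - fstar))) else 0) ∧
        x k = x (k - 1) - γ (k - 1) • g (k - 1)
          + ((((k : ℝ) - 1) / ((k : ℝ) + 1)) • (x (k - 1) - x (k - 2))))
    (xs : E) (hxs : xs ∈ Xstar) :
    Metric.infDist (x m) Xstar ^ 2 * ((m : ℝ) + 1) ≤ κ * ‖x 0 - xs‖ ^ 2 := by
  have hκ0 : (0:ℝ) < κ := by linarith
  have hfxs : f xs = fstar := hfstar xs hxs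
  have hxsmin : ∀ y, f xs ≤ f y := by rw [hXstar] at hxs; exact hxs
  have hmin : ∀ y, fstar ≤ f y := by intro y; rw [← hfxs]; exact hxsmin y
  -- hinv facts
  have hinv_mem : ∀ v : ℝ, 0 ≤ v → 0 ≤ hinv v ∧ h (hinv v) = v := by
    intro v hv
    obtain ⟨a, ha, hav⟩ := hbij.surjOn hv
    have h1 : hinv v = a := by rw [← hav]; exact hinvOn.1 ha
    exact ⟨h1 ▸ ha, hinvOn.2 hv⟩
  set r : ℕ → ℝ := fun k => hinv (f (x k) - fstar) with hrdef
  have hr0 : ∀ k, 0 ≤ r k := fun k => (hinv_mem _ (by linarith [hmin (x k)])).1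
  have hrh : ∀ k, h (r k) = f (x k) - fstar := fun k =>
    (hinv_mem _ (by linarith [hmin (x k)])).2
  have hrpos : ∀ k, fstar < f (x k) → 0 < r k := by
    intro k hlt
    rcases lt_or_eq_of_le (hr0 k) with hp | hp
    · exact hp
    · exfalso
      have := hrh k
      rw [← hp, h0] at this
      linarith
  set z' : ℕ → E := fun k => x k + (k:ℝ) • (x k - x (k-1)) with hz'def
  have hz'0 : z' 0 = x 0 := by simp [hz'def]
  -- the g-bound
  have gb : ∀ (w gw : E), (∀ y, f y ≥ f w + ⟪gw, y - w⟫) → fstar < f w →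
      ‖gw‖^2 ≤ 4 * h' (hinv (f w - fstar)) *
        (⟪gw, w - xs⟫ - hinv (f w - fstar) * h' (hinv (f w - fstar))) := by
    intro w gw hsub hlt
    set R := hinv (f w - fstar) with hRdef
    have hmemR := hinv_mem (f w - fstar) (by linarith)
    rw [← hRdef] at hmemR
    have hhR : h R = f w - fstar := hmemR.2
    have hRpos : 0 < R := by
      rcases lt_or_eq_of_le hmemR.1 with hp | hp
      · exact hp
      · exfalso; rw [← hp, h0] at hhR; linarith
    have hp : 0 < h' R := hpos R hRpos
    have hgne : gw ≠ 0 := by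
      intro hg0
      have := hsub xs
      rw [hg0] at this
      simp only [inner_zero_left] at this
      rw [hfxs] at this
      linarith
    have hgn : 0 < ‖gw‖ := norm_pos_iff.mpr hgne
    have key : ∀ t : ℝ, 0 ≤ t → t * ‖gw‖ ≤ ⟪gw, w - xs⟫ + h' R * (t^2 - R) := by
      intro t ht
      set y := xs + (t * ‖gw‖⁻¹) • gw with hydef
      have hyw : y - w = (t * ‖gw‖⁻¹) • gw - (w - xs) := by
        rw [hydef]; abel
      have hip : ⟪gw, y - w⟫ = t * ‖gw‖ - ⟪gw, w - xs⟫ := by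
        rw [hyw, inner_sub_right, real_inner_smul_right, real_inner_self_eq_norm_sq]
        have : t * ‖gw‖⁻¹ * ‖gw‖ ^ 2 = t * ‖gw‖ := by
          field_simp
        rw [this]
      have hdy : Metric.infDist y Xstar ≤ t := by
        have hd : dist y xs = t := by
          rw [dist_eq_norm, hydef]
          simp only [add_sub_cancel_left]
          rw [norm_smul, Real.norm_eq_abs, abs_of_nonneg (by positivity)]
          field_simp
        calc Metric.infDist y Xstar ≤ dist y xs := Metric.infDist_le_dist_of_mem hxs
          _ = t := hd
      have h1 : f y - fstar ≤ h (t^2) := by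
        calc f y - fstar ≤ h (Metric.infDist y Xstar ^ 2) := hRG y
          _ ≤ h (t^2) := by
              rcases eq_or_lt_of_le (pow_le_pow_left₀ Metric.infDist_nonneg hdy 2) with he | hl
              · rw [he]
              · exact le_of_lt (hmono (Set.mem_Ici.mpr (by positivity)) (Set.mem_Ici.mpr (by positivity)) hl)
      have h2 : h (t^2) ≤ h R + h' R * (t^2 - R) :=
        hb_tangent h h' hconc hderiv hRpos (sq_nonneg t)
      have h3 := hsub y
      rw [hip] at h3
      linarith
    have ht0 : 0 ≤ ‖gw‖ / (2 * h' R) := by positivity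
    have hk2 := key _ ht0
    have hpne : h' R ≠ 0 := ne_of_gt hp
    rw [div_mul_eq_mul_div, div_pow] at hk2
    rw [div_le_iff₀ (by positivity)] at hk2
    have hexp : (⟪gw, w - xs⟫ + h' R * (‖gw‖ ^ 2 / (2 * h' R) ^ 2 - R)) * (2 * h' R)
        = 2 * h' R * ⟪gw, w - xs⟫ + ‖gw‖^2/2 - 2 * R * (h' R)^2 := by
      field_simp
      ring
    rw [hexp] at hk2
    nlinarith [hk2]
  -- step recursion for z'
  have hzstep : ∀ k, k + 1 ≤ m →
      z' (k+1) = z' k - (((k:ℝ)+2) * γ k) • g k := by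
    intro k hle
    obtain ⟨hsub, hzero, hγ, hupd⟩ := hk (k+1) (by omega) hle
    rw [show k + 1 - 1 = k from by omega, show k + 1 - 2 = k - 1 from by omega] at hupd
    push_cast at hupd
    have hne2 : ((k:ℝ) + 2) ≠ 0 := by positivity
    simp only [hz'def]
    rw [hupd]
    push_cast
    match_scalars
    · field_simp
      ring
    · field_simp
      ring
    · field_simp
      ring
  -- potential decrease
  have hpot : ∀ k, k + 1 ≤ m →
      ‖z' (k+1) - xs‖^2 + ((k:ℝ)+1) * r k ≤ ‖z' k - xs‖^2 + (k:ℝ) * r (k-1) := by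
    intro k hle
    obtain ⟨hsub, hzero, hγ, _⟩ := hk (k+1) (by omega) hle
    rw [show k + 1 - 1 = k from by omega] at hsub hzero hγ
    push_cast at hγ
    have hzs := hzstep k hle
    have hkc : (0:ℝ) ≤ (k:ℝ) := Nat.cast_nonneg k
    rcases eq_or_lt_of_le (hmin (x k)) with heq | hlt
    · -- minimal already
      have hg0 : g k = 0 := hzero heq.symm
      have hz'eq : z' (k+1) = z' k := by rw [hzs, hg0]; simp
      have hrk : r k = 0 := by
        have hiz : hinv 0 = 0 := by
          have := hinvOn.1 (le_refl (0:ℝ))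
          rwa [h0] at this
        have : f (x k) - fstar = 0 := by linarith
        simp only [hrdef, this, hiz]
      rw [hz'eq, hrk]
      have := mul_nonneg hkc (hr0 (k-1))
      linarith
    · -- strictly above minimum
      have hR : 0 < r k := hrpos k hlt
      have hp : 0 < h' (r k) := hpos _ hR
      have hγk : γ k = 1 / (2 * ((k:ℝ) + 1 + 1) * h' (r k)) := by
        rw [hγ, if_pos hlt]
      set u : ℝ := 1 / (2 * h' (r k)) with hudef
      have hu : 0 < u := by positivity
      have h2up : 2 * u * h' (r k) = 1 := by
        rw [hudef]; field_simp
      have hcoef : ((k:ℝ) + 2) * γ k = u := by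
        rw [hγk, hudef]
        have : ((k:ℝ) + 2) ≠ 0 := by positivity
        field_simp
        ring
      have hz2 : z' (k+1) - xs = (z' k - xs) - u • g k := by
        rw [hzs, hcoef]; abel
      have hnorm : ‖z' (k+1) - xs‖^2
          = ‖z' k - xs‖^2 - 2 * u * ⟪g k, z' k - xs⟫ + u^2 * ‖g k‖^2 := by
        rw [hz2, norm_sub_sq_real, real_inner_smul_right, norm_smul, Real.norm_eq_abs]
        rw [real_inner_comm]
        rw [mul_pow, sq_abs]
        ring
      have hzdecomp : z' k - xs = (x k - xs) + (k:ℝ) • (x k - x (k-1)) := by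
        simp only [hz'def]; abel
      have hi1 : ⟪g k, z' k - xs⟫ = ⟪g k, x k - xs⟫ + (k:ℝ) * ⟪g k, x k - x (k-1)⟫ := by
        rw [hzdecomp, inner_add_right, real_inner_smul_right]
      have hc : h (r k) ≤ ⟪g k, x k - xs⟫ := by
        have := hsub xs
        rw [show xs - x k = -(x k - xs) from by abel, inner_neg_right] at this
        rw [hrh k]
        linarith [hfxs ▸ this]
      have he2 : h (r k) - h (r (k-1)) ≤ ⟪g k, x k - x (k-1)⟫ := by
        have := hsub (x (k-1))
        rw [show x (k-1) - x k = -(x k - x (k-1)) from by abel, inner_neg_right] at this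
        have hr1 := hrh (k-1)
        have hr2 := hrh k
        linarith
      have hgb : ‖g k‖^2 ≤ 4 * h' (r k) * (⟪g k, x k - xs⟫ - r k * h' (r k)) :=
        gb (x k) (g k) hsub hlt
      have htan : h (r (k-1)) ≤ h (r k) + h' (r k) * (r (k-1) - r k) :=
        hb_tangent h h' hconc hderiv hR (hr0 (k-1))
      -- linearized facts
      have fact1 : u^2 * ‖g k‖^2 ≤ 2 * u * ⟪g k, x k - xs⟫ - r k := by
        have hmul := mul_le_mul_of_nonneg_left hgb (sq_nonneg u)
        have heq : u^2 * (4 * h' (r k) * (⟪g k, x k - xs⟫ - r k * h' (r k)))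
            = (2 * u * h' (r k)) * (2 * u * ⟪g k, x k - xs⟫)
              - (2 * u * h' (r k)) * (2 * u * h' (r k)) * r k := by ring
        rw [heq, h2up] at hmul
        linarith
      have fact2 : 2 * u * ((k:ℝ) * ⟪g k, x k - x (k-1)⟫)
          ≥ (k:ℝ) * (r k - r (k-1)) := by
        have hstep1 : h' (r k) * (r k - r (k-1)) ≤ ⟪g k, x k - x (k-1)⟫ := by
          linarith [htan, he2]
        have hstep2 := mul_le_mul_of_nonneg_left hstep1 (by positivity : (0:ℝ) ≤ 2 * u * (k:ℝ))
        have heq : 2 * u * (k:ℝ) * (h' (r k) * (r k - r (k-1)))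
            = (2 * u * h' (r k)) * ((k:ℝ) * (r k - r (k-1))) := by ring
        rw [heq, h2up] at hstep2
        linarith
      rw [hnorm, hi1]
      linarith [fact1, fact2]
  -- telescoped
  have hkey : ∀ k, k ≤ m → ‖z' k - xs‖^2 + (k:ℝ) * r (k-1) ≤ ‖x 0 - xs‖^2 := by
    intro k
    induction k with
    | zero => intro _; rw [hz'0]; norm_num
    | succ n ih =>
      intro hle
      have h1 := hpot n hle
      have h2 := ih (by omega)
      have hgoal : ((n+1:ℕ):ℝ) * r ((n+1) - 1) = ((n:ℝ)+1) * r n := by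
        norm_num
      rw [hgoal]
      push_cast at h1
      linarith
  -- final assembly
  have hfin := hkey m le_rfl
  set A := ‖z' m - xs‖ with hAdef
  set B := Metric.infDist (x (m-1)) Xstar with hBdef
  have hAnn : 0 ≤ A := norm_nonneg _
  have hBnn : 0 ≤ B := Metric.infDist_nonneg
  have hB2 : B^2 ≤ κ * r (m-1) := by
    have hlg := hLG (x (m-1))
    have hh : h (B^2/κ) ≤ h (r (m-1)) := by rw [hrh]; exact hlg
    have hle : B^2/κ ≤ r (m-1) := by
      rcases le_or_gt (B^2/κ) (r (m-1)) with hgood | hbad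
      · exact hgood
      · exfalso
        have := hmono (Set.mem_Ici.mpr (hr0 (m-1))) (Set.mem_Ici.mpr (by positivity)) hbad
        linarith
    rw [div_le_iff₀ hκ0] at hle
    linarith
  have hXne : Xstar.Nonempty := ⟨xs, hxs⟩
  obtain ⟨p', hp'mem, hp'dist⟩ := hclosed.exists_infDist_eq_dist hXne (x (m-1))
  have hmp1 : (0:ℝ) < (m:ℝ) + 1 := by positivity
  set pt := (1/((m:ℝ)+1)) • xs + ((m:ℝ)/((m:ℝ)+1)) • p' with hptdef
  have hptmem : pt ∈ Xstar := by
    rw [hXstar]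
    intro y
    have hcomb := hconv.2 (Set.mem_univ xs) (Set.mem_univ p')
      (by positivity : (0:ℝ) ≤ 1/((m:ℝ)+1)) (by positivity : (0:ℝ) ≤ (m:ℝ)/((m:ℝ)+1))
      (by field_simp <;> ring)
    have hfp' : f p' = fstar := hfstar p' hp'mem
    rw [hfxs, hfp'] at hcomb
    have hsum : (1/((m:ℝ)+1)) * fstar + ((m:ℝ)/((m:ℝ)+1)) * fstar = fstar := by
      field_simp <;> ring
    calc f pt ≤ (1/((m:ℝ)+1)) * fstar + ((m:ℝ)/((m:ℝ)+1)) * fstar := hcomb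
      _ = fstar := hsum
      _ ≤ f y := hmin y
  have hxmdec : x m - pt = (1/((m:ℝ)+1)) • (z' m - xs) + ((m:ℝ)/((m:ℝ)+1)) • (x (m-1) - p') := by
    simp only [hz'def, hptdef]
    match_scalars <;> (field_simp <;> ring)
  have hdist : Metric.infDist (x m) Xstar ≤ (1/((m:ℝ)+1)) * A + ((m:ℝ)/((m:ℝ)+1)) * B := by
    have hBnorm : ‖x (m-1) - p'‖ = B := by
      rw [hBdef, hp'dist, dist_eq_norm]
    calc Metric.infDist (x m) Xstar ≤ dist (x m) pt := Metric.infDist_le_dist_of_mem hptmem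
      _ = ‖x m - pt‖ := dist_eq_norm _ _
      _ ≤ ‖(1/((m:ℝ)+1)) • (z' m - xs)‖ + ‖((m:ℝ)/((m:ℝ)+1)) • (x (m-1) - p')‖ := by
          rw [hxmdec]; exact norm_add_le _ _
      _ = (1/((m:ℝ)+1)) * A + ((m:ℝ)/((m:ℝ)+1)) * B := by
          rw [norm_smul, norm_smul, hBnorm, Real.norm_eq_abs, Real.norm_eq_abs,
            abs_of_pos (by positivity), abs_of_nonneg (by positivity)]
  have hdnn : 0 ≤ Metric.infDist (x m) Xstar := Metric.infDist_nonneg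
  have hsq : Metric.infDist (x m) Xstar ^ 2 * ((m:ℝ)+1)^2 ≤ (A + (m:ℝ) * B)^2 := by
    have h1 : Metric.infDist (x m) Xstar ^ 2 ≤ ((1/((m:ℝ)+1)) * A + ((m:ℝ)/((m:ℝ)+1)) * B)^2 :=
      pow_le_pow_left₀ hdnn hdist 2
    have h2 : ((1/((m:ℝ)+1)) * A + ((m:ℝ)/((m:ℝ)+1)) * B)^2
        = (A + (m:ℝ) * B)^2 / ((m:ℝ)+1)^2 := by
      field_simp <;> ring
    rw [h2] at h1
    rw [← le_div_iff₀ (by positivity)]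
    exact h1
  have hkc : (0:ℝ) ≤ (m:ℝ) := Nat.cast_nonneg m
  have s1 : (m:ℝ) * B^2 ≤ (m:ℝ) * (κ * r (m-1)) := mul_le_mul_of_nonneg_left hB2 hkc
  have s2 : κ * ((m:ℝ) * r (m-1)) ≤ κ * (‖x 0 - xs‖^2 - A^2) :=
    mul_le_mul_of_nonneg_left (by linarith [hfin]) hκ0.le
  have s3 : A^2 + (m:ℝ) * B^2 ≤ κ * ‖x 0 - xs‖^2 := by
    nlinarith [s1, s2, sq_nonneg A, hκ]
  have s4 : (A + (m:ℝ) * B)^2 ≤ ((m:ℝ)+1) * (A^2 + (m:ℝ) * B^2) := by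
    nlinarith [mul_nonneg hkc (sq_nonneg (A - B))]
  have s5 : Metric.infDist (x m) Xstar ^ 2 * ((m:ℝ)+1)^2
      ≤ ((m:ℝ)+1) * (κ * ‖x 0 - xs‖^2) :=
    le_trans hsq (le_trans s4 (by nlinarith [s3, hmp1]))
  have s6 : Metric.infDist (x m) Xstar ^ 2 * ((m:ℝ)+1) * ((m:ℝ)+1)
      ≤ (κ * ‖x 0 - xs‖^2) * ((m:ℝ)+1) := by
    nlinarith [s5]
  exact le_of_mul_le_mul_right s6 hmp1


theorem heavy_ball_restart_linear_convergence
    {E : Type*} [NormedAddCommGroup E] [InnerProductSpace ℝ E] [FiniteDimensional ℝ E]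
    (h hinv h' : ℝ → ℝ)
    (hbij : Set.BijOn h (Set.Ici 0) (Set.Ici 0))
    (hmono : StrictMonoOn h (Set.Ici 0))
    (hconc : ConcaveOn ℝ (Set.Ici 0) h)
    (h0 : h 0 = 0)
    (hderiv : ∀ t > (0 : ℝ), HasDerivAt h (h' t) t)
    (hpos : ∀ t > (0 : ℝ), 0 < h' t)
    (hinvOn : Set.InvOn hinv h (Set.Ici 0) (Set.Ici 0))
    (κ : ℝ) (hκ : 1 ≤ κ)
    (f : E → ℝ) (hconv : ConvexOn ℝ Set.univ f)
    (Xstar : Set E) (hXstar : Xstar = {z | ∀ y, f z ≤ f y}) (hne : Xstar.Nonempty)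
    (fstar : ℝ) (hfstar : ∀ z ∈ Xstar, f z = fstar)
    (hRG : ∀ z, f z - fstar ≤ h (Metric.infDist z Xstar ^ 2))
    (hLG : ∀ z, f z - fstar ≥ h (Metric.infDist z Xstar ^ 2 / κ))
    (x0 : E) (m : ℕ) (hm : m = Nat.floor (κ * Real.exp 1) - 1) (hm1 : 1 ≤ m)
    (z : ℕ → E) (hz0 : z 0 = x0)
    (hstep : ∀ q : ℕ, ∃ (x g : ℕ → E) (γ : ℕ → ℝ),
      x 0 = z q ∧ x m = z (q + 1) ∧
      ∀ k, 1 ≤ k → k ≤ m →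
        (∀ y, f y ≥ f (x (k - 1)) + ⟪g (k - 1), y - x (k - 1)⟫) ∧
        (f (x (k - 1)) = fstar → g (k - 1) = 0) ∧
        γ (k - 1) = (if fstar < f (x (k - 1))
            then 1 / (2 * ((k : ℝ) + 1) * h' (hinv (f (x (k - 1)) - fstar))) else 0) ∧
        x k = x (k - 1) - γ (k - 1) • g (k - 1)
          + ((((k : ℝ) - 1) / ((k : ℝ) + 1)) • (x (k - 1) - x (k - 2)))) :
    ∀ q : ℕ,
      Metric.infDist (z q) Xstar ^ 2
        ≤ (1 - 1 / (κ * Real.exp 1)) ^ (q * m) * Metric.infDist x0 Xstar ^ 2 := by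
  have hepos : (0:ℝ) < Real.exp 1 := Real.exp_pos 1
  have he1 : (1:ℝ) < Real.exp 1 := by
    have := Real.exp_one_gt_d9; linarith
  have hn1 : (1:ℝ) ≤ κ * Real.exp 1 := by nlinarith
  have hρnn : (0:ℝ) ≤ 1 - 1 / (κ * Real.exp 1) := by
    have : 1 / (κ * Real.exp 1) ≤ 1 := by
      rw [div_le_one (by linarith)]
      exact hn1
    linarith
  -- f is continuous, Xstar is closed
  have hcont : Continuous f := by
    have := hconv.continuousOn isOpen_univ
    exact continuousOn_univ.mp this
  obtain ⟨w0, hw0⟩ := hne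
  have hfmin : ∀ y, fstar ≤ f y := by
    intro y
    rw [← hfstar w0 hw0]
    have : ∀ y', f w0 ≤ f y' := by rw [hXstar] at hw0; exact hw0
    exact this y
  have hclosed : IsClosed Xstar := by
    have hXeq : Xstar = f ⁻¹' (Set.Iic fstar) := by
      ext v
      simp only [hXstar, Set.mem_setOf_eq, Set.mem_preimage, Set.mem_Iic]
      constructor
      · intro hv
        rw [← hfstar w0 hw0]
        exact hv w0
      · intro hv y
        exact le_trans hv (hfmin y)
    rw [hXeq]
    exact isClosed_Iic.preimage hcont
  have hnum := hb_numeric κ hκ m hm hm1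
  -- contraction per epoch
  have hcontract : ∀ q, Metric.infDist (z (q+1)) Xstar ^ 2
      ≤ (1 - 1 / (κ * Real.exp 1)) ^ m * Metric.infDist (z q) Xstar ^ 2 := by
    intro q
    obtain ⟨xq, gq, γq, hq0, hqm, hkk⟩ := hstep q
    obtain ⟨xs, hxsmem, hxsdist⟩ := hclosed.exists_infDist_eq_dist ⟨w0, hw0⟩ (z q)
    have hep := hb_epoch h hinv h' hbij hmono hconc h0 hderiv hpos hinvOn κ hκ f hconv
      Xstar hXstar fstar hfstar hRG hLG hclosed m hm1 xq gq γq hkk xs hxsmem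
    rw [hqm, hq0] at hep
    have hznorm : ‖z q - xs‖ = Metric.infDist (z q) Xstar := by
      rw [hxsdist, dist_eq_norm]
    rw [hznorm] at hep
    have hdq : (0:ℝ) ≤ Metric.infDist (z q) Xstar ^ 2 := sq_nonneg _
    have h2 := mul_le_mul_of_nonneg_right hnum hdq
    have hmp1 : (0:ℝ) < (m:ℝ) + 1 := by positivity
    have h3 : Metric.infDist (z (q+1)) Xstar ^ 2 * ((m:ℝ) + 1)
        ≤ ((1 - 1 / (κ * Real.exp 1)) ^ m * Metric.infDist (z q) Xstar ^ 2) * ((m:ℝ) + 1) := by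
      calc Metric.infDist (z (q+1)) Xstar ^ 2 * ((m:ℝ) + 1)
          ≤ κ * Metric.infDist (z q) Xstar ^ 2 := hep
        _ ≤ ((m:ℝ) + 1) * (1 - 1 / (κ * Real.exp 1)) ^ m * Metric.infDist (z q) Xstar ^ 2 := h2
        _ = ((1 - 1 / (κ * Real.exp 1)) ^ m * Metric.infDist (z q) Xstar ^ 2) * ((m:ℝ) + 1) := by
            ring
    exact le_of_mul_le_mul_right h3 hmp1
  intro q
  induction q with
  | zero => simp [hz0]
  | succ n ih =>
    have hc := hcontract n
    have hpow : (0:ℝ) ≤ (1 - 1 / (κ * Real.exp 1)) ^ m := pow_nonneg hρnn m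
    calc Metric.infDist (z (n+1)) Xstar ^ 2
        ≤ (1 - 1 / (κ * Real.exp 1)) ^ m * Metric.infDist (z n) Xstar ^ 2 := hc
      _ ≤ (1 - 1 / (κ * Real.exp 1)) ^ m
          * ((1 - 1 / (κ * Real.exp 1)) ^ (n * m) * Metric.infDist x0 Xstar ^ 2) :=
          mul_le_mul_of_nonneg_left ih hpow
      _ = (1 - 1 / (κ * Real.exp 1)) ^ ((n+1) * m) * Metric.infDist x0 Xstar ^ 2 := by
          rw [← mul_assoc, ← pow_add]
          congr 2
          ring
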